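/- Let g ∈ A be a unit and λ ∈ K with Tᵢ(g) = λ·g for all 1 ≤ i ≤ n−1, and suppose T_n(g) = (b + w·X_n⁻¹)·g for some w ∈ {u, −v}. Then g is an eigenvector of T₀; more precisely T₀(g) = (u·w·Q⁻¹)·g, so T₀(g) = (u·v⁻¹)·g if w = u, and T₀(g) = −g if w = −v. -/

import Mathlib

open AddMonoidAlgebra

/-- The Laurent polynomial ring `K[X₁^{±1},…,X_n^{±1}]` in `n` variables,
realized as the monoid algebra of `ℤⁿ` over `K`. -/
abbrev LPn (K : Type*) [Field K] (n : ℕ) := AddMonoidAlgebra K (Fin n → ℤ)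

/-- The variable `Xᵢ`. -/
noncomputable def Xv {K : Type*} [Field K] {n : ℕ} (i : Fin n) : LPn K n :=
  of' K (Fin n → ℤ) (Pi.single i 1)

/-- The inverse variable `Xᵢ⁻¹`. -/
noncomputable def XvInv {K : Type*} [Field K] {n : ℕ} (i : Fin n) : LPn K n :=
  of' K (Fin n → ℤ) (Pi.single i (-1))

/-- The `K`-algebra automorphism of `LPn K n` swapping the variables `Xᵢ` and `Xⱼ`. -/
noncomputable def swapAlg (K : Type*) [Field K] {n : ℕ} (i j : Fin n) :
    LPn K n ≃ₐ[K] LPn K n :=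
  AddMonoidAlgebra.domCongr K K
    (AddEquiv.arrowCongr (Equiv.swap i j) (AddEquiv.refl ℤ))

/-- The additive automorphism of `ℤⁿ` negating the `m`-th coordinate. -/
def negCoord {n : ℕ} (m : Fin n) : (Fin n → ℤ) ≃+ (Fin n → ℤ) where
  toFun f := fun k => if k = m then -f k else f k
  invFun f := fun k => if k = m then -f k else f k
  left_inv f := by funext k; by_cases h : k = m <;> simp [h]
  right_inv f := by funext k; by_cases h : k = m <;> simp [h]
  map_add' f g := by
    funext k; by_cases h : k = m <;> simp [h] <;> ring

/-- The `K`-algebra automorphism `h ↦ h∨` of `LPn K n` sending `X_m` to `X_m⁻¹`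
and fixing the other variables. -/
noncomputable def veeAlg (K : Type*) [Field K] {n : ℕ} (m : Fin n) :
    LPn K n ≃ₐ[K] LPn K n :=
  AddMonoidAlgebra.domCongr K K (negCoord m)

/-- `Tᵢ⁻¹ = τ⁻¹·(Tᵢ − (τ−1)·id)`. -/
noncomputable def TInvA {K : Type*} [Field K] {n : ℕ} (τ : K)
    (S : Module.End K (LPn K n)) : Module.End K (LPn K n) :=
  τ⁻¹ • (S - (τ - 1) • LinearMap.id)

/-- `T_n⁻¹ = Q⁻¹·(T_n − b·id)` where `b = Q − 1`. -/
noncomputable def TInvC {K : Type*} [Field K] {n : ℕ} (Q : K)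
    (S : Module.End K (LPn K n)) : Module.End K (LPn K n) :=
  Q⁻¹ • (S - (Q - 1) • LinearMap.id)

/-- The composition `T_{n-1-j}⁻¹ ∘ ⋯ ∘ T_{n-1}⁻¹ ∘ T_n⁻¹ ∘ T_{n-1}⁻¹ ∘ ⋯ ∘ T_{n-1-j}⁻¹`
(with `T_n⁻¹` in the middle); `midChain n τ Q Ti Tn (n-1)` is the full sandwich
`T₁⁻¹ ∘ ⋯ ∘ T_{n-1}⁻¹ ∘ T_n⁻¹ ∘ T_{n-1}⁻¹ ∘ ⋯ ∘ T₁⁻¹`. -/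
noncomputable def midChain {K : Type*} [Field K] {n : ℕ} (τ Q : K)
    (Ti : ℕ → Module.End K (LPn K n)) (Tn : Module.End K (LPn K n)) :
    ℕ → Module.End K (LPn K n)
  | 0 => TInvC Q Tn
  | j + 1 =>
      TInvA τ (Ti (n - 1 - j)) ∘ₗ midChain τ Q Ti Tn j ∘ₗ TInvA τ (Ti (n - 1 - j))
/-- The operator `T₀ := u·τ^{n−1}·(multiplication by X₁) ∘ T₁⁻¹∘⋯∘T_{n-1}⁻¹∘T_n⁻¹∘T_{n-1}⁻¹∘⋯∘T₁⁻¹`. -/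
noncomputable def T0op {K : Type*} [Field K] {n : ℕ} (hn : 0 < n) (τ u v : K)
    (Ti : ℕ → Module.End K (LPn K n)) (Tn : Module.End K (LPn K n)) :
    Module.End K (LPn K n) :=
  (u * τ ^ (n - 1)) •
    (LinearMap.mulLeft K (Xv (⟨0, hn⟩ : Fin n)) ∘ₗ midChain τ (u * v) Ti Tn (n - 1))

lemma Xv_mul_XvInv {K : Type*} [Field K] {n : ℕ} (i : Fin n) :
    (Xv i : LPn K n) * XvInv i = 1 := by
  rw [Xv, XvInv, of'_apply, of'_apply, single_mul_single]
  simp [← Pi.single_add, AddMonoidAlgebra.one_def]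

lemma Xv_sub_ne {K : Type*} [Field K] {n : ℕ} {i j : Fin n} (h : i ≠ j) :
    (Xv i : LPn K n) - Xv j ≠ 0 := by
  intro hc
  rw [sub_eq_zero, Xv, Xv, of'_apply, of'_apply] at hc
  have hps := (AddMonoidAlgebra.single_left_inj (one_ne_zero (α := K))).mp hc
  have := congrFun hps i
  simp [Pi.single_apply, h] at this

lemma swapAlg_XvInv {K : Type*} [Field K] {n : ℕ} (i j : Fin n) :
    swapAlg K i j (XvInv j) = XvInv i := by
  rw [XvInv, XvInv, swapAlg, of'_apply, of'_apply, AddMonoidAlgebra.domCongr_single]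
  congr 1
  funext k
  simp only [AddEquiv.arrowCongr_apply, AddEquiv.refl_apply, Function.comp_apply]
  rw [Pi.single_apply, Pi.single_apply]
  congr 1
  simp only [Equiv.symm_swap]
  rw [eq_iff_iff]
  constructor
  · intro hk; have := congrArg (Equiv.swap i j) hk; simpa using this
  · rintro rfl; simp

/-- If `g` is a unit of `A = K[X₁^{±1},…,X_n^{±1}]` which is a common
eigenvector of `T₁,…,T_{n-1}` (with eigenvalue `λ`) and satisfies
`T_n(g) = (b + w·X_n⁻¹)·g` for some `w ∈ {u, −v}`, then `g` is an eigenvector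
of `T₀` with eigenvalue `u·w·Q⁻¹`. -/
theorem statement16 {K : Type*} [Field K] {n : ℕ} (hn : 0 < n) (τ u v : K)
    (hτ : τ ≠ 0) (hu : u ≠ 0) (hv : v ≠ 0)
    (Ti : ℕ → Module.End K (LPn K n)) (Tn : Module.End K (LPn K n))
    (hquadA : ∀ i, 1 ≤ i → i ≤ n - 1 →
      ∀ x, Ti i (Ti i x) = (τ - 1) • Ti i x + τ • x)
    (hquadC : ∀ x, Tn (Tn x) = (u * v - 1) • Tn x + (u * v) • x)
    (hcommA : ∀ i, ∀ _hi : 1 ≤ i, ∀ _hi' : i ≤ n - 1, ∀ h x : LPn K n,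
      (Xv ⟨i - 1, by omega⟩ - Xv ⟨i, by omega⟩) *
          (Ti i (h * x) - swapAlg K ⟨i - 1, by omega⟩ ⟨i, by omega⟩ h * Ti i x)
        = (τ - 1) • (Xv ⟨i - 1, by omega⟩ *
            ((h - swapAlg K ⟨i - 1, by omega⟩ ⟨i, by omega⟩ h) * x)))
    (hcommC : ∀ h x : LPn K n,
      (Xv ⟨n - 1, by omega⟩ * Xv ⟨n - 1, by omega⟩ - 1) *
          (Tn (h * x) - veeAlg K ⟨n - 1, by omega⟩ h * Tn x)
        = ((u * v - 1) • (Xv ⟨n - 1, by omega⟩ * Xv ⟨n - 1, by omega⟩)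
              + (u - v) • Xv ⟨n - 1, by omega⟩)
            * ((h - veeAlg K ⟨n - 1, by omega⟩ h) * x))
    (g : LPn K n) (hg : IsUnit g) (lam : K)
    (heig : ∀ i, 1 ≤ i → i ≤ n - 1 → Ti i g = lam • g)
    (w : K) (hw : w = u ∨ w = -v)
    (hTng : Tn g = ((u * v - 1) • (1 : LPn K n) + w • XvInv ⟨n - 1, by omega⟩) * g) :
    T0op hn τ u v Ti Tn g = (u * w * (u * v)⁻¹) • g := by
  have hQ : u * v ≠ 0 := mul_ne_zero hu hv
  have hgne : g ≠ 0 := hg.ne_zero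
  have key : ∀ j, j ≤ n - 1 →
      midChain τ (u * v) Ti Tn j g
        = ((u * v)⁻¹ * w * (τ⁻¹) ^ j) • (XvInv (⟨n - 1 - j, by omega⟩ : Fin n) * g) := by
    intro j
    induction j with
    | zero =>
        intro _
        show TInvC (u * v) Tn g = _
        rw [TInvC]
        simp only [LinearMap.smul_apply, LinearMap.sub_apply, LinearMap.id_apply, pow_zero,
          mul_one]
        rw [hTng, add_mul, smul_mul_assoc, smul_mul_assoc, one_mul]
        rw [add_sub_cancel_left, smul_smul]
        rfl
    | succ j ih =>
        intro hj1
        have hjn : j ≤ n - 1 := by omega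
        have ih' := ih hjn
        have hi1 : 1 ≤ n - 1 - j := by omega
        have hin : n - 1 - j ≤ n - 1 := by omega
        set i := n - 1 - j with hi
        set fa : Fin n := ⟨i - 1, by omega⟩ with hfa
        set fb : Fin n := ⟨i, by omega⟩ with hfb
        have hTig : Ti i g = lam • g := heig i hi1 hin
        -- quadratic relation gives lam * lam = (τ-1) * lam + τ
        have h1 := hquadA i hi1 hin g
        rw [hTig, map_smul, hTig] at h1
        have h2 : (lam * lam) • g = ((τ - 1) * lam + τ) • g := by
          rw [add_smul, mul_smul, mul_smul]; exact h1
        have hlam : lam * lam = (τ - 1) * lam + τ := smul_left_injective K hgne h2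
        -- Bernstein relation consequence
        have hAB := hcommA i hi1 hin (XvInv fb) g
        rw [swapAlg_XvInv] at hAB
        have hrhs : Xv fa * ((XvInv fb - XvInv fa) * g)
            = (Xv fa - Xv fb) * (XvInv fb * g) := by
          linear_combination g * Xv_mul_XvInv (K := K) fb - g * Xv_mul_XvInv (K := K) fa
        rw [hrhs, ← mul_smul_comm] at hAB
        have hne : fa ≠ fb := by
          rw [hfa, hfb, Fin.ne_iff_vne]
          simp only
          omega
        have hAB2 := mul_left_cancel₀ (Xv_sub_ne hne) hAB
        have key2 : Ti i (XvInv fb * g)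
            = lam • (XvInv fa * g) + (τ - 1) • (XvInv fb * g) := by
          rw [sub_eq_iff_eq_add] at hAB2
          rw [hAB2, hTig, mul_smul_comm]
          ring
        have key3 : TInvA τ (Ti i) (XvInv fb * g) = (τ⁻¹ * lam) • (XvInv fa * g) := by
          rw [TInvA]
          simp only [LinearMap.smul_apply, LinearMap.sub_apply, LinearMap.id_apply]
          rw [key2, add_sub_cancel_right, smul_smul]
        have key4 : TInvA τ (Ti i) g = (τ⁻¹ * (lam - (τ - 1))) • g := by
          rw [TInvA]
          simp only [LinearMap.smul_apply, LinearMap.sub_apply, LinearMap.id_apply]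
          rw [hTig, ← sub_smul, smul_smul]
        show TInvA τ (Ti i) (midChain τ (u * v) Ti Tn j (TInvA τ (Ti i) g)) = _
        rw [key4, map_smul, ih', map_smul, map_smul, key3]
        have hidx : (⟨n - 1 - (j + 1), by omega⟩ : Fin n) = fa := by
          rw [hfa, Fin.mk_eq_mk]
          omega
        rw [hidx, smul_smul, smul_smul]
        congr 1
        have hml : (lam - (τ - 1)) * lam = τ := by linear_combination hlam
        have hl2 : τ⁻¹ * (lam - (τ - 1)) * (τ⁻¹ * lam) = τ⁻¹ := by
          rw [show τ⁻¹ * (lam - (τ - 1)) * (τ⁻¹ * lam)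
              = τ⁻¹ * τ⁻¹ * ((lam - (τ - 1)) * lam) by ring, hml, mul_assoc,
            inv_mul_cancel₀ hτ, mul_one]
        rw [pow_succ]
        linear_combination ((u * v)⁻¹ * w * (τ⁻¹) ^ j) * hl2
  have hfin := key (n - 1) le_rfl
  have hidx0 : (⟨n - 1 - (n - 1), by omega⟩ : Fin n) = ⟨0, hn⟩ := by
    rw [Fin.mk_eq_mk]; omega
  rw [hidx0] at hfin
  rw [T0op]
  simp only [LinearMap.smul_apply, LinearMap.coe_comp, Function.comp_apply,
    LinearMap.mulLeft_apply]
  rw [hfin, mul_smul_comm, ← mul_assoc, Xv_mul_XvInv, one_mul, smul_smul]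
  congr 1
  have hpow : τ ^ (n - 1) * (τ⁻¹) ^ (n - 1) = 1 := by
    rw [inv_pow, mul_inv_cancel₀ (pow_ne_zero _ hτ)]
  linear_combination (u * (u * v)⁻¹ * w) * hpow
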